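/- Let U ⊆ ℝ^n be open, let d ∈ {0,…,n}, and let f : U → ℝ^{n−d} be real-analytic such that M := {x ∈ U : f(x) = 0} is nonempty and the Jacobian ∂f/∂x has rank n−d at every point of M. Let Π : ℝ^n → ℝ^d and Π' : ℝ^n → ℝ^{n−d} be complementary coordinate projections, and write x = (y,y') with y = Π(x) and y' = Π'(x). Then Π is a good direction for M if and only if Π is injective on M and det(∂f/∂y') ≠ 0 at every point of M. -/

import Mathlib

open Matrix Module

private lemma aux_fderiv_comp_proj {n m : ℕ} {f : (Fin n → ℝ) → Fin m → ℝ} {a : Fin n → ℝ}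
    (hf : DifferentiableAt ℝ f a) (i : Fin m) (v : Fin n → ℝ) :
    fderiv ℝ (fun z => f z i) a v = fderiv ℝ f a v i := by
  have h1 : HasFDerivAt (fun z => f z i)
      ((ContinuousLinearMap.proj i).comp (fderiv ℝ f a)) a :=
    ((ContinuousLinearMap.proj i : (Fin m → ℝ) →L[ℝ] ℝ).hasFDerivAt).comp a hf.hasFDerivAt
  rw [h1.fderiv]; rfl

private lemma aux_matrix_eq {n m : ℕ} {f : (Fin n → ℝ) → Fin m → ℝ} {a : Fin n → ℝ}
    (hf : DifferentiableAt ℝ f a) :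
    (Matrix.of fun (i : Fin m) (j : Fin n) => fderiv ℝ (fun z => f z i) a (Pi.single j 1))
      = LinearMap.toMatrix' (fderiv ℝ f a : (Fin n → ℝ) →ₗ[ℝ] (Fin m → ℝ)) := by
  ext i j
  rw [Matrix.of_apply, LinearMap.toMatrix'_apply, aux_fderiv_comp_proj hf]
  have : (Pi.single j 1 : Fin n → ℝ) = fun j' => if j' = j then 1 else 0 := by
    funext k; simp [Pi.single_apply]
  rw [this]; rfl

private lemma aux_mulVec {n m : ℕ} {f : (Fin n → ℝ) → Fin m → ℝ} {a : Fin n → ℝ}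
    (hf : DifferentiableAt ℝ f a) (v : Fin n → ℝ) :
    fderiv ℝ f a v =
      (Matrix.of fun (i : Fin m) (j : Fin n) =>
        fderiv ℝ (fun z => f z i) a (Pi.single j 1)) *ᵥ v := by
  rw [aux_matrix_eq hf, ← Matrix.toLin'_apply, Matrix.toLin'_toMatrix']; rfl

private lemma aux_rank {n m : ℕ} {f : (Fin n → ℝ) → Fin m → ℝ} {a : Fin n → ℝ}
    (hf : DifferentiableAt ℝ f a) :
    (Matrix.of fun (i : Fin m) (j : Fin n) =>
        fderiv ℝ (fun z => f z i) a (Pi.single j 1)).rank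
      = finrank ℝ (LinearMap.range (fderiv ℝ f a : (Fin n → ℝ) →ₗ[ℝ] (Fin m → ℝ))) := by
  rw [aux_matrix_eq hf, Matrix.rank, ← Matrix.toLin'_apply', Matrix.toLin'_toMatrix']

/-- A coordinate projection-type map `π : E → ℝ^d` is a *good direction* for `M ⊆ E` if
`π(M)` is open in `ℝ^d`, `π` is injective on `M`, and the inverse map `π(M) → E` of
`π` restricted to `M` is real-analytic. -/
def IsGoodDirection {E : Type*} [NormedAddCommGroup E] [NormedSpace ℝ E] {d : ℕ}
    (π : E → (Fin d → ℝ)) (M : Set E) : Prop :=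
  IsOpen (π '' M) ∧ Set.InjOn π M ∧
    ∃ F : (Fin d → ℝ) → E, (∀ y ∈ π '' M, AnalyticAt ℝ F y) ∧ ∀ x ∈ M, F (π x) = x

/-- **Characterization of good directions.**  Let `U ⊆ ℝⁿ` be open, `d ≤ n`, and let
`f : U → ℝ^{n−d}` be real-analytic with nonempty zero set `M` on which the Jacobian
`∂f/∂x` has rank `n−d`.  For complementary coordinate projections `Π = Π_λ : ℝⁿ → ℝ^d`
and `Π' = Π_{λ'} : ℝⁿ → ℝ^{n−d}`, the projection `Π` is a good direction for `M` iff
`Π` is injective on `M` and `det(∂f/∂y') ≠ 0` at every point of `M`. -/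
theorem stmt17 {n d : ℕ} (hd : d ≤ n)
    (U : Set (Fin n → ℝ)) (hU : IsOpen U)
    (f : (Fin n → ℝ) → Fin (n - d) → ℝ)
    (hf : ∀ x ∈ U, AnalyticAt ℝ f x)
    (hMne : {x ∈ U | f x = 0}.Nonempty)
    (lam : Fin d → Fin n) (lam' : Fin (n - d) → Fin n)
    (hlam : Function.Injective lam) (hlam' : Function.Injective lam')
    (hcompl : Set.range lam ∪ Set.range lam' = Set.univ)
    (hfRank : ∀ x ∈ {x ∈ U | f x = 0},
      (Matrix.of fun (i : Fin (n - d)) (j : Fin n) =>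
        fderiv ℝ (fun z => f z i) x (Pi.single j 1)).rank = n - d) :
    IsGoodDirection (fun x i => x (lam i)) {x ∈ U | f x = 0} ↔
      (Set.InjOn (fun x i => x (lam i)) {x ∈ U | f x = 0} ∧
        ∀ x ∈ {x ∈ U | f x = 0},
          (Matrix.of fun i j : Fin (n - d) =>
            fderiv ℝ (fun z => f z i) x (Pi.single (lam' j) 1)).det ≠ 0) := by
  classical
  have hσ : Function.Bijective (Sum.elim lam lam') := by
    rw [Fintype.bijective_iff_surjective_and_card]
    refine ⟨?_, by simp; omega⟩
    rw [← Set.range_eq_univ, Set.Sum.elim_range, hcompl]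
  set σe : (Fin d ⊕ Fin (n - d)) ≃ Fin n := Equiv.ofBijective _ hσ with hσe
  set M := {x ∈ U | f x = 0} with hM
  set P : (Fin n → ℝ) → (Fin d → ℝ) := fun x i => x (lam i) with hPdef
  let Plin : (Fin n → ℝ) →L[ℝ] (Fin d → ℝ) :=
    ContinuousLinearMap.pi fun i => ContinuousLinearMap.proj (lam i)
  have hPlin : ⇑Plin = P := rfl
  have hsplit : ∀ g : Fin n → ℝ, ∑ k, g k = (∑ t, g (lam t)) + ∑ j, g (lam' j) := by
    intro g
    rw [← Equiv.sum_comp σe g, Fintype.sum_sum_type]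
    rfl
  -- the square matrix at a point
  set A : (Fin n → ℝ) → Matrix (Fin (n - d)) (Fin (n - d)) ℝ := fun a =>
    Matrix.of fun i j : Fin (n - d) =>
      fderiv ℝ (fun z => f z i) a (Pi.single (lam' j) 1) with hAdef
  have hmv : ∀ a ∈ U, ∀ v : Fin n → ℝ, (∀ t, v (lam t) = 0) →
      ∀ i, fderiv ℝ f a v i = ((A a) *ᵥ fun j => v (lam' j)) i := by
    intro a ha v hv i
    have hdfa : DifferentiableAt ℝ f a := (hf a ha).differentiableAt
    rw [aux_mulVec hdfa v]
    show ∑ k, _ * v k = ∑ j, _ * v (lam' j)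
    rw [hsplit fun k =>
      (Matrix.of fun (i : Fin (n - d)) (j : Fin n) =>
        fderiv ℝ (fun z => f z i) a (Pi.single j 1)) i k * v k]
    simp only [Matrix.of_apply]
    rw [Finset.sum_congr rfl fun t _ => by rw [hv t, mul_zero]]
    simp [hAdef]
  constructor
  · rintro ⟨hopen, hinj, F, hFan, hFeq⟩
    refine ⟨hinj, ?_⟩
    intro a ha hdet0
    obtain ⟨v, hv0, hAv⟩ := Matrix.exists_mulVec_eq_zero_iff.mpr hdet0
    have haU : a ∈ U := ha.1
    have hdfa : DifferentiableAt ℝ f a := (hf a haU).differentiableAt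
    set w : Fin n → ℝ := fun k => Sum.elim (fun _ => (0 : ℝ)) v (σe.symm k) with hwdef
    have hwlam : ∀ t, w (lam t) = 0 := by
      intro t
      have h1 : σe.symm (lam t) = Sum.inl t := by rw [Equiv.symm_apply_eq]; rfl
      simp [hwdef, h1]
    have hwlam' : ∀ j, w (lam' j) = v j := by
      intro j
      have h1 : σe.symm (lam' j) = Sum.inr j := by rw [Equiv.symm_apply_eq]; rfl
      simp [hwdef, h1]
    have hLw : fderiv ℝ f a w = 0 := by
      funext i
      have h1 := hmv a haU w hwlam i
      have h2 : (fun j => w (lam' j)) = v := funext hwlam'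
      rw [h1, h2, hAv]
    -- facts about F
    have hPaM : P a ∈ P '' M := ⟨a, ha, rfl⟩
    have hFan' : AnalyticAt ℝ F (P a) := hFan _ hPaM
    have hFdiff : DifferentiableAt ℝ F (P a) := hFan'.differentiableAt
    have hFa : F (P a) = a := hFeq a ha
    have hnb : P '' M ∈ nhds (P a) := hopen.mem_nhds hPaM
    have himg : ∀ y ∈ P '' M, F y ∈ M ∧ P (F y) = y := by
      rintro y ⟨x, hx, rfl⟩
      rw [hFeq x hx]; exact ⟨hx, rfl⟩
    set DF := fderiv ℝ F (P a) with hDF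
    have hcomp0 : (fderiv ℝ f a).comp DF = 0 := by
      have h1 : HasFDerivAt (f ∘ F) ((fderiv ℝ f a).comp DF) (P a) :=
        HasFDerivAt.comp (P a) (by rw [hFa]; exact hdfa.hasFDerivAt) hFdiff.hasFDerivAt
      have h3 : f ∘ F =ᶠ[nhds (P a)] fun _ => 0 :=
        Filter.eventuallyEq_of_mem hnb fun y hy => (himg y hy).1.2
      rw [← h1.fderiv, h3.fderiv_eq, fderiv_fun_const]
      rfl
    have hcompId : Plin.comp DF = ContinuousLinearMap.id ℝ _ := by
      have h1 : HasFDerivAt (⇑Plin ∘ F) (Plin.comp DF) (P a) :=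
        Plin.hasFDerivAt.comp (P a) hFdiff.hasFDerivAt
      have h3 : ⇑Plin ∘ F =ᶠ[nhds (P a)] id :=
        Filter.eventuallyEq_of_mem hnb fun y hy => (himg y hy).2
      rw [← h1.fderiv, h3.fderiv_eq, fderiv_id]
    -- linear algebra
    have hkerdim :
        finrank ℝ (LinearMap.ker (fderiv ℝ f a : (Fin n → ℝ) →ₗ[ℝ] (Fin (n - d) → ℝ))) = d := by
      have hr := hfRank a ha
      rw [aux_rank hdfa] at hr
      have h2 := LinearMap.finrank_range_add_finrank_ker
        (fderiv ℝ f a : (Fin n → ℝ) →ₗ[ℝ] (Fin (n - d) → ℝ))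
      rw [hr, Module.finrank_fin_fun] at h2
      omega
    have hli : Function.LeftInverse Plin DF := fun u => by
      rw [← ContinuousLinearMap.comp_apply, hcompId]; rfl
    have hDFinj : Function.Injective DF := hli.injective
    have hrangeDF :
        finrank ℝ (LinearMap.range (DF : (Fin d → ℝ) →ₗ[ℝ] (Fin n → ℝ))) = d := by
      rw [LinearMap.finrank_range_of_inj hDFinj, Module.finrank_fin_fun]
    have hle : LinearMap.range (DF : (Fin d → ℝ) →ₗ[ℝ] (Fin n → ℝ)) ≤
        LinearMap.ker (fderiv ℝ f a : (Fin n → ℝ) →ₗ[ℝ] (Fin (n - d) → ℝ)) := by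
      rintro x ⟨u, rfl⟩
      have h1 : fderiv ℝ f a (DF u) = ((fderiv ℝ f a).comp DF) u := rfl
      simp only [LinearMap.mem_ker, ContinuousLinearMap.coe_coe, h1, hcomp0]
      rfl
    have heq : LinearMap.range (DF : (Fin d → ℝ) →ₗ[ℝ] (Fin n → ℝ)) =
        LinearMap.ker (fderiv ℝ f a : (Fin n → ℝ) →ₗ[ℝ] (Fin (n - d) → ℝ)) :=
      Submodule.eq_of_le_of_finrank_eq hle (by rw [hrangeDF, hkerdim])
    have hwker : w ∈ LinearMap.ker (fderiv ℝ f a : (Fin n → ℝ) →ₗ[ℝ] (Fin (n - d) → ℝ)) := by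
      simp only [LinearMap.mem_ker, ContinuousLinearMap.coe_coe]
      exact hLw
    rw [← heq] at hwker
    obtain ⟨u, hu⟩ := hwker
    have hu0 : u = 0 := by
      have h1 : Plin w = u := by
        rw [show w = DF u from hu.symm]
        exact hli u
      have h2 : Plin w = 0 := funext hwlam
      rw [h2] at h1; exact h1.symm
    apply hv0
    funext j
    rw [← hwlam' j, show w = DF u from hu.symm, hu0, map_zero]
    rfl
  · rintro ⟨hinj, hdet⟩
    have key : ∀ a ∈ M, ∃ V : Set (Fin d → ℝ), IsOpen V ∧ P a ∈ V ∧
        ∃ Fa : (Fin d → ℝ) → (Fin n → ℝ), AnalyticAt ℝ Fa (P a) ∧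
          ∀ y ∈ V, Fa y ∈ M ∧ P (Fa y) = y := by
      intro a ha
      have haU : a ∈ U := ha.1
      have hfa0 : f a = 0 := ha.2
      have hdfa : DifferentiableAt ℝ f a := (hf a haU).differentiableAt
      set G : (Fin n → ℝ) → (Fin d → ℝ) × (Fin (n - d) → ℝ) := fun x => (P x, f x) with hG
      have hGan : AnalyticAt ℝ G a := (Plin.analyticAt a).prod (hf a haU)
      set G' := Plin.prod (fderiv ℝ f a) with hG'
      have hGd : HasFDerivAt G G' a := Plin.hasFDerivAt.prodMk hdfa.hasFDerivAt
      have hker0 : ∀ v : Fin n → ℝ, G' v = 0 → v = 0 := by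
        intro v hv
        have hv1 : ∀ t, v (lam t) = 0 := fun t => congrFun (congrArg Prod.fst hv) t
        have hv2 : fderiv ℝ f a v = 0 := congrArg Prod.snd hv
        have hAv : (A a) *ᵥ (fun j => v (lam' j)) = 0 := by
          funext i
          rw [← hmv a haU v hv1 i, hv2]
        have hvl' : (fun j => v (lam' j)) = 0 := by
          by_contra hne
          exact hdet a ha (Matrix.exists_mulVec_eq_zero_iff.mp ⟨_, hne, hAv⟩)
        funext k
        obtain ⟨s, hs⟩ := σe.surjective k
        cases s with
        | inl t => rw [← hs]; exact hv1 t
        | inr j => rw [← hs]; exact congrFun hvl' j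
      have hG'inj : Function.Injective G' := by
        intro v v' hvv'
        have h1 : G' (v - v') = 0 := by rw [map_sub, hvv', sub_self]
        have := hker0 _ h1
        rwa [sub_eq_zero] at this
      have hfr : finrank ℝ (Fin n → ℝ) =
          finrank ℝ ((Fin d → ℝ) × (Fin (n - d) → ℝ)) := by
        rw [Module.finrank_prod, Module.finrank_fin_fun, Module.finrank_fin_fun,
          Module.finrank_fin_fun]
        omega
      set Glin := LinearMap.linearEquivOfInjective
        (G' : (Fin n → ℝ) →ₗ[ℝ] ((Fin d → ℝ) × (Fin (n - d) → ℝ))) hG'inj hfr with hGlin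
      set cle := Glin.toContinuousLinearEquiv with hcle'
      have hcle : (cle : (Fin n → ℝ) →L[ℝ] ((Fin d → ℝ) × (Fin (n - d) → ℝ))) = G' := by
        apply ContinuousLinearMap.ext
        intro v
        exact LinearMap.linearEquivOfInjective_apply hG'inj hfr v
      have hstrict : HasStrictFDerivAt G
          (cle : (Fin n → ℝ) →L[ℝ] ((Fin d → ℝ) × (Fin (n - d) → ℝ))) a :=
        (hGan.contDiffAt (n := 1)).hasStrictFDerivAt' (hcle ▸ hGd) one_ne_zero
      set φ := hstrict.toOpenPartialHomeomorph G with hφ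
      have hφcoe : ⇑φ = G := hstrict.toOpenPartialHomeomorph_coe
      have hsrc : a ∈ φ.source := hstrict.mem_toOpenPartialHomeomorph_source
      have htgt : G a ∈ φ.target := hstrict.image_mem_toOpenPartialHomeomorph_target
      have hsymm : AnalyticAt ℝ φ.symm (G a) := by
        have h1 : AnalyticAt ℝ φ a := by rw [show ⇑φ = G from hφcoe]; exact hGan
        have h2 : fderiv ℝ φ a = cle := by
          rw [show ⇑φ = G from hφcoe]; exact hstrict.hasFDerivAt.fderiv
        have h3 := φ.analyticAt_symm' hsrc h1 h2
        rwa [show φ a = G a from by rw [hφcoe]] at h3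
      have hGa : G a = (P a, 0) := by rw [hG]; simp [hfa0]
      set Fa : (Fin d → ℝ) → (Fin n → ℝ) := fun y => φ.symm (y, 0) with hFadef
      have hFaan : AnalyticAt ℝ Fa (P a) := by
        have h1 : AnalyticAt ℝ (fun y : Fin d → ℝ => ((y, 0) : (Fin d → ℝ) × (Fin (n - d) → ℝ)))
            (P a) := ((ContinuousLinearMap.inl ℝ (Fin d → ℝ) (Fin (n - d) → ℝ)).analyticAt (P a))
        have h2 : AnalyticAt ℝ φ.symm ((P a, 0) : (Fin d → ℝ) × (Fin (n - d) → ℝ)) := by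
          rw [← hGa]; exact hsymm
        exact AnalyticAt.comp
          (f := fun y : Fin d → ℝ => ((y, 0) : (Fin d → ℝ) × (Fin (n - d) → ℝ))) h2 h1
      set T := φ.target ∩ φ.symm ⁻¹' U with hT
      have hTopen : IsOpen T := φ.isOpen_inter_preimage_symm hU
      have hιcont : Continuous (fun y : Fin d → ℝ => ((y, 0) : (Fin d → ℝ) × (Fin (n - d) → ℝ))) :=
        (ContinuousLinearMap.inl ℝ (Fin d → ℝ) (Fin (n - d) → ℝ)).continuous
      refine ⟨(fun y : Fin d → ℝ => ((y, 0) : (Fin d → ℝ) × (Fin (n - d) → ℝ))) ⁻¹' T,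
        hTopen.preimage hιcont, ?_, Fa, hFaan, ?_⟩
      · refine ⟨?_, ?_⟩
        · show ((P a, 0) : (Fin d → ℝ) × (Fin (n - d) → ℝ)) ∈ φ.target
          rw [← hGa]; exact htgt
        · show φ.symm (P a, 0) ∈ U
          rw [← hGa, show G a = φ a from by rw [hφcoe], φ.left_inv hsrc]
          exact haU
      · intro y hy
        obtain ⟨hy1, hy2⟩ := hy
        have hre : φ (φ.symm (y, 0)) = (y, 0) := φ.right_inv hy1
        have hGF : G (Fa y) = (y, 0) := by rw [← hφcoe]; exact hre
        have hPy : P (Fa y) = y := congrArg Prod.fst hGF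
        have hfy : f (Fa y) = 0 := congrArg Prod.snd hGF
        exact ⟨⟨hy2, hfy⟩, hPy⟩
    have hopen : IsOpen (P '' M) := by
      rw [isOpen_iff_forall_mem_open]
      rintro z ⟨a, ha, rfl⟩
      obtain ⟨V, hVopen, hVa, Fa, _, hV⟩ := key a ha
      exact ⟨V, fun y hy => ⟨Fa y, (hV y hy).1, (hV y hy).2⟩, hVopen, hVa⟩
    refine ⟨hopen, hinj, Function.invFunOn P M, ?_, ?_⟩
    · rintro y ⟨a, ha, rfl⟩
      obtain ⟨V, hVopen, hVa, Fa, hFaan, hV⟩ := key a ha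
      apply hFaan.congr
      filter_upwards [hVopen.mem_nhds hVa] with y hy
      obtain ⟨hyM, hyP⟩ := hV y hy
      have hx : Function.invFunOn P M (P (Fa y)) = Fa y := hinj.leftInvOn_invFunOn hyM
      rw [hyP] at hx
      exact hx.symm
    · intro x hx
      exact hinj.leftInvOn_invFunOn hx
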